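/- Let μ > 0, λ ∈ (0,1), let a be real and a0 a nonzero real, and let ρ > 0, ρ1 > 0, ρ2 > 0 be real. If λμa0·(ρ1 − ρ2)·((ρ1 + ρ2)² − ρ²)/(2ρρ1ρ2) = 0 and (1−λ)μa·(ρ1 − ρ2)·((ρ1 + ρ2)² − ρ²)/(2ρρ1ρ2) + (ρ2 − ρ1)/(ρ1ρ2) = 0, then ρ1 = ρ2. -/
import Mathlib


/-- Configuration II with a0 ≠ 0: vanishing of the two difference
expressions forces equal beacon distances ρ1 = ρ2. -/
theorem stmt9 (μ lam a a0 ρ ρ1 ρ2 : ℝ)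
    (hμ : μ > 0) (hlam1 : 0 < lam) (hlam2 : lam < 1) (ha0 : a0 ≠ 0)
    (hρ : ρ > 0) (h1 : ρ1 > 0) (h2 : ρ2 > 0)
    (e1 : lam * μ * a0 * (ρ1 - ρ2) * ((ρ1 + ρ2) ^ 2 - ρ ^ 2) / (2 * ρ * ρ1 * ρ2) = 0)
    (e2 : (1 - lam) * μ * a * (ρ1 - ρ2) * ((ρ1 + ρ2) ^ 2 - ρ ^ 2) / (2 * ρ * ρ1 * ρ2)
        + (ρ2 - ρ1) / (ρ1 * ρ2) = 0) :
    ρ1 = ρ2 := by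
  have hden : (2 * ρ * ρ1 * ρ2) ≠ 0 := by positivity
  have hnum : lam * μ * a0 * (ρ1 - ρ2) * ((ρ1 + ρ2) ^ 2 - ρ ^ 2) = 0 :=
    (div_eq_zero_iff.mp e1).resolve_right hden
  have hkey : (ρ1 - ρ2) * ((ρ1 + ρ2) ^ 2 - ρ ^ 2) = 0 := by
    have h3 : lam * μ * a0 ≠ 0 := by
      apply mul_ne_zero (mul_ne_zero (ne_of_gt hlam1) (ne_of_gt hμ)) ha0
    have := mul_eq_zero.mp (by linarith [hnum] : (lam * μ * a0) * ((ρ1 - ρ2) * ((ρ1 + ρ2) ^ 2 - ρ ^ 2)) = 0)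
    tauto
  rcases mul_eq_zero.mp hkey with h | h
  · linarith
  · rw [show (ρ1 - ρ2) * ((ρ1 + ρ2) ^ 2 - ρ ^ 2) = 0 from hkey] at *
    have : (1 - lam) * μ * a * (ρ1 - ρ2) * ((ρ1 + ρ2) ^ 2 - ρ ^ 2) = 0 := by
      rw [h]; ring
    rw [this, zero_div, zero_add] at e2
    have := (div_eq_zero_iff.mp e2).resolve_right (by positivity : ρ1 * ρ2 ≠ 0)
    linarith
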